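/- Let α, β ∈ (0,1) and let y = (y₀, y₁) with y₀, y₁ ∈ (0,1) and y₀ + y₁ = 1, and let K = K(y) = [−αβ(y₀ − y₁) + √((αβ(y₀ − y₁))² + 4αβ(1−α)(1−β)y₀y₁)] / (2α(1−β)y₀). Then: (i) for u ∈ (0,1) and w = (1−u)/u, one has y₀·log(u/((1−α)u + α(1−u))) + y₁·log((1−u)/(βu + (1−β)(1−u))) = −y₀·log(1−α+αw) − y₁·log(1−β+β/w); (ii) the function w ↦ −y₀·log(1−α+αw) − y₁·log(1−β+β/w) attains its supremum over w ∈ (0,∞) at the unique point w = K; consequently (iii) M*(y) := sup_{u ∈ (0,1)} [y₀·log(u/((1−α)u + α(1−u))) + y₁·log((1−u)/(βu + (1−β)(1−u)))] = −y₀·log(1−α+αK) − y₁·log(1−β+β/K). -/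

import Mathlib

open Real

/-- Tangent-line (strict concavity) inequality for `log (1 - α + α * w)`. -/
lemma stmt7_tangent_strict (α w K : ℝ) (hα0 : 0 < α) (hα1 : α < 1) (hw : 0 < w) (hK : 0 < K)
    (hne : w ≠ K) :
    α * K / (1 - α + α * K) * (Real.log w - Real.log K)
      < Real.log (1 - α + α * w) - Real.log (1 - α + α * K) := by
  have hPK : 0 < 1 - α + α * K := by nlinarith
  have hPw : 0 < 1 - α + α * w := by nlinarith
  set p := α * K / (1 - α + α * K) with hp
  have hp0 : 0 < p := div_pos (mul_pos hα0 hK) hPK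
  have hp1 : p < 1 := by rw [hp, div_lt_one hPK]; nlinarith
  have hx : w / K ∈ Set.Ioi (0:ℝ) := Set.mem_Ioi.mpr (div_pos hw hK)
  have h1 : (1:ℝ) ∈ Set.Ioi (0:ℝ) := Set.mem_Ioi.mpr one_pos
  have hxne : w / K ≠ 1 := by
    intro h
    exact hne ((div_eq_one_iff_eq hK.ne').mp h)
  have hcc := strictConcaveOn_log_Ioi.2 hx h1 hxne hp0 (by linarith : (0:ℝ) < 1 - p) (by ring)
  simp only [smul_eq_mul, Real.log_one, mul_zero, add_zero, mul_one] at hcc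
  have hcomb : p * (w / K) + (1 - p) = (1 - α + α * w) / (1 - α + α * K) := by
    rw [hp]; field_simp; ring
  rw [hcomb, Real.log_div hPw.ne' hPK.ne', Real.log_div hw.ne' hK.ne'] at hcc
  linarith

/-- Tangent-line inequality for `log (1 - α + α * w)`. -/
lemma stmt7_tangent_le (α w K : ℝ) (hα0 : 0 < α) (hα1 : α < 1) (hw : 0 < w) (hK : 0 < K) :
    α * K / (1 - α + α * K) * (Real.log w - Real.log K)
      ≤ Real.log (1 - α + α * w) - Real.log (1 - α + α * K) := by
  rcases eq_or_ne w K with h | h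
  · subst h; simp
  · exact (stmt7_tangent_strict α w K hα0 hα1 hw hK h).le

set_option maxHeartbeats 1000000 in
/-- Two-state rate function via the substitution `w = (1−u)/u`:
(i) the change of variables identity; (ii) the function
`g w = −y₀ log(1−α+αw) − y₁ log(1−β+β/w)` attains its supremum over `(0,∞)`
uniquely at `w = K`; consequently (iii)
`M*(y) = sup_{u ∈ (0,1)} [y₀ log(u/((1−α)u+α(1−u))) + y₁ log((1−u)/(βu+(1−β)(1−u)))]`
equals `−y₀ log(1−α+αK) − y₁ log(1−β+β/K)`. -/
theorem stmt7
    (α β : ℝ) (hα0 : 0 < α) (hα1 : α < 1) (hβ0 : 0 < β) (hβ1 : β < 1)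
    (y₀ y₁ : ℝ) (hy₀0 : 0 < y₀) (hy₀1 : y₀ < 1) (hy₁0 : 0 < y₁) (hy₁1 : y₁ < 1)
    (hsum : y₀ + y₁ = 1)
    (K : ℝ)
    (hK : K = (-(α * β * (y₀ - y₁)) +
        Real.sqrt ((α * β * (y₀ - y₁))^2 + 4 * α * β * (1 - α) * (1 - β) * y₀ * y₁))
      / (2 * α * (1 - β) * y₀))
    (f : ℝ → ℝ)
    (hf : ∀ u, f u = y₀ * Real.log (u / ((1 - α) * u + α * (1 - u)))
        + y₁ * Real.log ((1 - u) / (β * u + (1 - β) * (1 - u))))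
    (g : ℝ → ℝ)
    (hg : ∀ w, g w = -(y₀ * Real.log (1 - α + α * w)) - y₁ * Real.log (1 - β + β / w)) :
    -- (i) change of variables
    (∀ u : ℝ, 0 < u → u < 1 → f u = g ((1 - u) / u))
    -- (ii) unique maximizer of g on (0,∞)
    ∧ 0 < K
    ∧ (∀ w : ℝ, 0 < w → g w ≤ g K)
    ∧ (∀ w : ℝ, 0 < w → g w = g K → w = K)
    -- (iii) the value of the supremum
    ∧ sSup {r | ∃ u : ℝ, 0 < u ∧ u < 1 ∧ r = f u} = g K := by
  have hα1' : 0 < 1 - α := by linarith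
  have hβ1' : 0 < 1 - β := by linarith
  -- the discriminant and its square root
  set D : ℝ := (α * β * (y₀ - y₁))^2 + 4 * α * β * (1 - α) * (1 - β) * y₀ * y₁ with hD
  have hprod : 0 < 4 * α * β * (1 - α) * (1 - β) * y₀ * y₁ := by
    have h4α : (0:ℝ) < 4 * α := by linarith
    exact mul_pos (mul_pos (mul_pos (mul_pos (mul_pos h4α hβ0) hα1') hβ1') hy₀0) hy₁0
  have hDpos : 0 < D := by
    rw [hD]; nlinarith [sq_nonneg (α * β * (y₀ - y₁))]
  set s : ℝ := Real.sqrt D with hs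
  have hs0 : 0 ≤ s := Real.sqrt_nonneg D
  have hs2 : s ^ 2 = D := Real.sq_sqrt hDpos.le
  have hden : (0:ℝ) < 2 * α * (1 - β) * y₀ := by
    have h2α : (0:ℝ) < 2 * α := by linarith
    exact mul_pos (mul_pos h2α hβ1') hy₀0
  have hE1 : 2 * (α * (1 - β) * y₀) * K + α * β * (y₀ - y₁) = s := by
    rw [hK]; field_simp; ring
  -- K is positive
  have hsb : α * β * (y₀ - y₁) < s := by
    rw [hD] at hs2
    nlinarith [hs0, hs2, hprod]
  have hK0 : 0 < K := by nlinarith [hE1, hsb, hden]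
  -- K satisfies the quadratic equation
  have hquad : α * (1 - β) * y₀ * K ^ 2 + α * β * (y₀ - y₁) * K - (1 - α) * β * y₁ = 0 := by
    have h4 : (2 * (α * (1 - β) * y₀) * K + α * β * (y₀ - y₁)) ^ 2 = D := by
      rw [hE1]; exact hs2
    rw [hD] at h4
    have h5 : 4 * (α * (1 - β) * y₀) *
        (α * (1 - β) * y₀ * K ^ 2 + α * β * (y₀ - y₁) * K - (1 - α) * β * y₁) = 0 := by
      linear_combination h4
    have h6 : (0:ℝ) < 4 * (α * (1 - β) * y₀) := by nlinarith [hden]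
    exact (mul_eq_zero.mp h5).resolve_left h6.ne'
  -- positivity of the denominators at K
  have hPK : 0 < 1 - α + α * K := by nlinarith
  have hQK : 0 < 1 - β + β / K := by
    have := div_pos hβ0 hK0; linarith
  -- converting the second log-denominator
  have hR : 0 < (1 - β) * K + β := by nlinarith
  -- the critical-point identity
  have hid : y₀ * (α * K / (1 - α + α * K)) = y₁ * (β / K / (1 - β + β / K)) := by
    have e : β / K / (1 - β + β / K) = β / ((1 - β) * K + β) := by
      rw [div_div]
      congr 1
      field_simp
    rw [e, mul_div_assoc', mul_div_assoc', div_eq_div_iff hPK.ne' hR.ne']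
    linear_combination hquad
  -- part (i): change of variables
  have hfg : ∀ u : ℝ, 0 < u → u < 1 → f u = g ((1 - u) / u) := by
    intro u hu0 hu1
    have hu1' : 0 < 1 - u := by linarith
    have hA : 0 < (1 - α) * u + α * (1 - u) :=
      add_pos (mul_pos hα1' hu0) (mul_pos hα0 hu1')
    have hB : 0 < β * u + (1 - β) * (1 - u) :=
      add_pos (mul_pos hβ0 hu0) (mul_pos hβ1' hu1')
    rw [hf, hg]
    have e1 : 1 - α + α * ((1 - u) / u) = ((1 - α) * u + α * (1 - u)) / u := by
      field_simp
    have e2 : 1 - β + β / ((1 - u) / u) = (β * u + (1 - β) * (1 - u)) / (1 - u) := by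
      rw [div_div_eq_mul_div]
      field_simp
      ring
    rw [e1, e2, Real.log_div hA.ne' hu0.ne', Real.log_div hB.ne' hu1'.ne',
      Real.log_div hu0.ne' hA.ne', Real.log_div hu1'.ne' hB.ne']
    ring
  -- part (ii): K maximizes g on (0, ∞)
  have hmax : ∀ w : ℝ, 0 < w → g w ≤ g K := by
    intro w hw
    have h1 := stmt7_tangent_le α w K hα0 hα1 hw hK0
    have h2 := stmt7_tangent_le β (1/w) (1/K) hβ0 hβ1 (by positivity) (by positivity)
    rw [mul_one_div, mul_one_div, one_div w, one_div K, Real.log_inv, Real.log_inv] at h2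
    have h1' := mul_le_mul_of_nonneg_left h1 hy₀0.le
    have h2' := mul_le_mul_of_nonneg_left h2 hy₁0.le
    have hid' : y₀ * (α * K / (1 - α + α * K)) * (Real.log w - Real.log K)
        = y₁ * (β / K / (1 - β + β / K)) * (Real.log w - Real.log K) := by rw [hid]
    rw [hg w, hg K]
    linarith [h1', h2', hid']
  -- part (ii): uniqueness of the maximizer
  have huniq : ∀ w : ℝ, 0 < w → g w = g K → w = K := by
    intro w hw heq
    by_contra hne
    have h1 := stmt7_tangent_strict α w K hα0 hα1 hw hK0 hne
    have h2 := stmt7_tangent_le β (1/w) (1/K) hβ0 hβ1 (by positivity) (by positivity)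
    rw [mul_one_div, mul_one_div, one_div w, one_div K, Real.log_inv, Real.log_inv] at h2
    have h1' := mul_lt_mul_of_pos_left h1 hy₀0
    have h2' := mul_le_mul_of_nonneg_left h2 hy₁0.le
    have hid' : y₀ * (α * K / (1 - α + α * K)) * (Real.log w - Real.log K)
        = y₁ * (β / K / (1 - β + β / K)) * (Real.log w - Real.log K) := by rw [hid]
    have : g w < g K := by
      rw [hg w, hg K]
      linarith [h1', h2', hid']
    linarith [this, heq.ge]
  refine ⟨hfg, hK0, hmax, huniq, ?_⟩
  -- part (iii): the supremum
  have h1K : (0:ℝ) < 1 + K := by linarith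
  have hu0 : (0:ℝ) < 1 / (1 + K) := div_pos one_pos h1K
  have hu1 : 1 / (1 + K) < 1 := by
    rw [div_lt_one h1K]; linarith
  have hmem : g K ∈ {r | ∃ u : ℝ, 0 < u ∧ u < 1 ∧ r = f u} := by
    show ∃ u : ℝ, 0 < u ∧ u < 1 ∧ g K = f u
    refine ⟨1 / (1 + K), hu0, hu1, ?_⟩
    rw [hfg _ hu0 hu1]
    congr 1
    field_simp
    ring
  have hub : ∀ r ∈ {r | ∃ u : ℝ, 0 < u ∧ u < 1 ∧ r = f u}, r ≤ g K := by
    rintro r ⟨u, hu0, hu1, rfl⟩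
    rw [hfg u hu0 hu1]
    exact hmax _ (div_pos (by linarith) hu0)
  exact IsGreatest.csSup_eq ⟨hmem, hub⟩
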